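/- Partial-identification manifold: fix ν ∈ ℝ and a value p with 0 < p < Φ(ν). Then for every ρ ∈ (-1,1), there exists a unique μ(ρ) ∈ ℝ with Φ₂(μ(ρ), ν; ρ) = p, and the function ρ ↦ μ(ρ) is strictly decreasing on (-1,1). -/

import Mathlib

open MeasureTheory Real Set Filter

noncomputable def stdPdf (x : ℝ) : ℝ := (Real.sqrt (2 * Real.pi))⁻¹ * Real.exp (-(x ^ 2) / 2)

noncomputable def stdCdf (x : ℝ) : ℝ := ∫ v in Set.Iio x, stdPdf v

noncomputable def Phi2 (μ ν ρ : ℝ) : ℝ :=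
  ∫ v in Set.Iio μ, stdCdf ((ν - ρ * v) / Real.sqrt (1 - ρ ^ 2)) * stdPdf v

noncomputable def phi2 (μ ν ρ : ℝ) : ℝ :=
  (2 * Real.pi * Real.sqrt (1 - ρ ^ 2))⁻¹ *
    Real.exp (-(μ ^ 2 - 2 * ρ * μ * ν + ν ^ 2) / (2 * (1 - ρ ^ 2)))

lemma stdPdf_pos (x : ℝ) : 0 < stdPdf x := by
  unfold stdPdf
  positivity

lemma stdPdf_le (x : ℝ) : stdPdf x ≤ (Real.sqrt (2 * Real.pi))⁻¹ := by
  unfold stdPdf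
  have h1 : Real.exp (-(x ^ 2) / 2) ≤ 1 := by
    rw [Real.exp_le_one_iff]
    nlinarith [sq_nonneg x]
  have h2 : (0:ℝ) ≤ (Real.sqrt (2 * Real.pi))⁻¹ := by positivity
  nlinarith

lemma continuous_stdPdf : Continuous stdPdf := by
  unfold stdPdf
  fun_prop

lemma integrable_stdPdf : Integrable stdPdf := by
  unfold stdPdf
  have : Integrable (fun x : ℝ => Real.exp (-(1/2) * x ^ 2)) := integrable_exp_neg_mul_sq (by norm_num)
  have h := this.const_mul (Real.sqrt (2 * Real.pi))⁻¹
  refine h.congr (Eventually.of_forall fun x => ?_)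
  ring_nf

lemma integral_stdPdf : ∫ x, stdPdf x = 1 := by
  unfold stdPdf
  rw [MeasureTheory.integral_const_mul]
  have : ∀ x : ℝ, Real.exp (-(x ^ 2) / 2) = Real.exp (-(1/2) * x ^ 2) := fun x => by ring_nf
  simp_rw [this, integral_gaussian]
  have h2 : Real.pi / (1/2) = 2 * Real.pi := by ring
  rw [h2]
  exact inv_mul_cancel₀ (Real.sqrt_ne_zero'.mpr (by positivity))

section Generic
variable {h : ℝ → ℝ} (hc : Continuous h) (hi : Integrable h)

include hi in
lemma cdf_sub (a b : ℝ) :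
    (∫ v in Set.Iio b, h v) - ∫ v in Set.Iio a, h v = ∫ v in a..b, h v := by
  rw [← integral_Iic_eq_integral_Iio, ← integral_Iic_eq_integral_Iio]
  exact intervalIntegral.integral_Iic_sub_Iic hi.integrableOn hi.integrableOn

include hc hi in
lemma cdf_hasDerivAt (x : ℝ) :
    HasDerivAt (fun u => ∫ v in Set.Iio u, h v) (h x) x := by
  have key : HasDerivAt (fun u => ∫ v in (0:ℝ)..u, h v) (h x) x :=
    intervalIntegral.integral_hasDerivAt_right hi.intervalIntegrable
      (hc.stronglyMeasurableAtFilter _ _) hc.continuousAt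
  have : ∀ u : ℝ, ∫ v in Set.Iio u, h v = (∫ v in (0:ℝ)..u, h v) + ∫ v in Set.Iio (0:ℝ), h v := by
    intro u
    rw [← cdf_sub hi 0 u]
    ring
  have heq : (fun u => ∫ v in Set.Iio u, h v)
      = fun u => (∫ v in (0:ℝ)..u, h v) + ∫ v in Set.Iio (0:ℝ), h v := funext this
  rw [heq]
  exact key.add_const _

include hc hi in
lemma cdf_strictMono (hpos : ∀ x, 0 < h x) :
    StrictMono (fun u => ∫ v in Set.Iio u, h v) := by
  intro a b hab
  have : (0:ℝ) < ∫ v in a..b, h v :=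
    intervalIntegral.intervalIntegral_pos_of_pos hi.intervalIntegrable hpos hab
  have h2 := cdf_sub hi a b
  show (∫ v in Set.Iio a, h v) < ∫ v in Set.Iio b, h v
  linarith

include hc hi in
lemma cdf_tendsto_atBot :
    Tendsto (fun u => ∫ v in Set.Iio u, h v) atBot (nhds 0) := by
  have : ∀ u : ℝ, ∫ v in Set.Iio u, h v = ∫ v, (Set.Iio u).indicator h v := by
    intro u; rw [integral_indicator measurableSet_Iio]
  simp_rw [this]
  have h0 : (0:ℝ) = ∫ v : ℝ, (0:ℝ) := by simp
  rw [h0]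
  apply tendsto_integral_filter_of_dominated_convergence (fun v => |h v|)
  · exact Eventually.of_forall fun u =>
      (hc.aestronglyMeasurable).indicator measurableSet_Iio
  · refine Eventually.of_forall fun u => Eventually.of_forall fun v => ?_
    rw [Real.norm_eq_abs]
    rcases le_or_gt u v with hv | hv
    · rw [Set.indicator_of_notMem (by simp [hv])]; simp [abs_nonneg]
    · rw [Set.indicator_of_mem (by simpa using hv)]
  · exact hi.abs
  · refine Eventually.of_forall fun v => ?_
    have : ∀ᶠ u in atBot, (Set.Iio u).indicator h v = 0 := by
      filter_upwards [eventually_lt_atBot v] with u hu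
      exact Set.indicator_of_notMem (by simp [hu.le]) _
    exact Tendsto.congr' (this.mono fun u hu => hu.symm) tendsto_const_nhds

include hc hi in
lemma cdf_tendsto_atTop :
    Tendsto (fun u => ∫ v in Set.Iio u, h v) atTop (nhds (∫ v, h v)) := by
  have : ∀ u : ℝ, ∫ v in Set.Iio u, h v = ∫ v, (Set.Iio u).indicator h v := by
    intro u; rw [integral_indicator measurableSet_Iio]
  simp_rw [this]
  apply tendsto_integral_filter_of_dominated_convergence (fun v => |h v|)
  · exact Eventually.of_forall fun u =>
      (hc.aestronglyMeasurable).indicator measurableSet_Iio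
  · refine Eventually.of_forall fun u => Eventually.of_forall fun v => ?_
    rw [Real.norm_eq_abs]
    rcases le_or_gt u v with hv | hv
    · rw [Set.indicator_of_notMem (by simp [hv])]; simp [abs_nonneg]
    · rw [Set.indicator_of_mem (by simpa using hv)]
  · exact hi.abs
  · refine Eventually.of_forall fun v => ?_
    have : ∀ᶠ u in atTop, (Set.Iio u).indicator h v = h v := by
      filter_upwards [eventually_gt_atTop v] with u hu
      exact Set.indicator_of_mem (by simpa using hu) _
    exact Tendsto.congr' (this.mono fun u hu => hu.symm) tendsto_const_nhds

end Generic

section Scaled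
variable {s : ℝ} (hs0 : 0 < s) (c : ℝ)

include hs0 in
lemma integrable_stdPdf_affine : Integrable (fun t => stdPdf ((t - c)/s)) := by
  have h1 : Integrable (fun t : ℝ => stdPdf (t/s)) := integrable_stdPdf.comp_div hs0.ne'
  exact h1.comp_sub_right c

include hs0 in
lemma integral_stdPdf_affine : ∫ t, s⁻¹ * stdPdf ((t - c)/s) = 1 := by
  rw [MeasureTheory.integral_const_mul]
  rw [integral_sub_right_eq_self (fun t => stdPdf (t/s)) c]
  rw [Measure.integral_comp_div stdPdf s, integral_stdPdf, abs_of_pos hs0]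
  simp [inv_mul_cancel₀ hs0.ne']

end Scaled

lemma hasDerivAt_stdCdf (x : ℝ) : HasDerivAt stdCdf (stdPdf x) x :=
  cdf_hasDerivAt continuous_stdPdf integrable_stdPdf x

lemma continuous_stdCdf : Continuous stdCdf := by
  have : ∀ x, HasDerivAt stdCdf (stdPdf x) x := hasDerivAt_stdCdf
  exact (continuous_iff_continuousAt.mpr fun x => (this x).continuousAt)

lemma stdCdf_tendsto_atBot : Tendsto stdCdf atBot (nhds 0) :=
  cdf_tendsto_atBot continuous_stdPdf integrable_stdPdf

-- (b): representation of shifted cdf as integral over Iio ν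
lemma stdCdf_affine_repr {s : ℝ} (hs0 : 0 < s) (c ν : ℝ) :
    stdCdf ((ν - c)/s) = ∫ t in Set.Iio ν, s⁻¹ * stdPdf ((t - c)/s) := by
  have hderiv : ∀ t ∈ Set.Iic ν, HasDerivAt (fun u => stdCdf ((u - c)/s))
      (s⁻¹ * stdPdf ((t - c)/s)) t := by
    intro t _
    have h1 : HasDerivAt (fun u : ℝ => (u - c)/s) s⁻¹ t := by
      simpa using ((hasDerivAt_id t).sub_const c).div_const s
    have := (hasDerivAt_stdCdf ((t - c)/s)).comp t h1
    simpa [mul_comm, Function.comp_def] using this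
  have hint : IntegrableOn (fun t => s⁻¹ * stdPdf ((t - c)/s)) (Set.Iic ν) := by
    exact ((integrable_stdPdf_affine hs0 c).const_mul _).integrableOn
  have htend : Tendsto (fun u => stdCdf ((u - c)/s)) atBot (nhds 0) := by
    apply stdCdf_tendsto_atBot.comp
    apply Tendsto.atBot_div_const hs0
    exact tendsto_atBot_add_const_right _ _ tendsto_id
  have := MeasureTheory.integral_Iic_of_hasDerivAt_of_tendsto' hderiv hint htend
  rw [← integral_Iic_eq_integral_Iio, this]
  ring

section Exchange
variable {ρ s : ℝ} (hs0 : 0 < s) (hρ : s^2 = 1 - ρ^2)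

include hs0 hρ in
lemma pdf_exchange (v t : ℝ) :
    stdPdf v * (s⁻¹ * stdPdf ((t - ρ*v)/s)) = stdPdf t * (s⁻¹ * stdPdf ((v - ρ*t)/s)) := by
  unfold stdPdf
  have key : -(v^2)/2 + -(((t - ρ*v)/s)^2)/2 = -(t^2)/2 + -(((v - ρ*t)/s)^2)/2 := by
    have hs : s ≠ 0 := hs0.ne'
    field_simp
    ring_nf
    linear_combination (t^2 - v^2) * hρ
  calc (Real.sqrt (2*Real.pi))⁻¹ * Real.exp (-(v^2)/2) *
        (s⁻¹ * ((Real.sqrt (2*Real.pi))⁻¹ * Real.exp (-(((t - ρ*v)/s)^2)/2)))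
      = (Real.sqrt (2*Real.pi))⁻¹ * (Real.sqrt (2*Real.pi))⁻¹ * s⁻¹ *
        Real.exp (-(v^2)/2 + -(((t - ρ*v)/s)^2)/2) := by rw [Real.exp_add]; ring
    _ = (Real.sqrt (2*Real.pi))⁻¹ * (Real.sqrt (2*Real.pi))⁻¹ * s⁻¹ *
        Real.exp (-(t^2)/2 + -(((v - ρ*t)/s)^2)/2) := by rw [key]
    _ = _ := by rw [Real.exp_add]; ring

include hs0 hρ in
lemma inner_integral (t : ℝ) :
    ∫ v, stdPdf v * (s⁻¹ * stdPdf ((t - ρ*v)/s)) = stdPdf t := by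
  have h1 : ∀ v, stdPdf v * (s⁻¹ * stdPdf ((t - ρ*v)/s))
      = stdPdf t * (s⁻¹ * stdPdf ((v - ρ*t)/s)) := fun v => pdf_exchange hs0 hρ v t
  simp_rw [h1]
  rw [MeasureTheory.integral_const_mul, integral_stdPdf_affine hs0 (ρ*t), mul_one]

include hs0 hρ in
lemma phi2_total (ν : ℝ) :
    ∫ v, stdCdf ((ν - ρ*v)/s) * stdPdf v = stdCdf ν := by
  set G : ℝ → ℝ → ℝ := fun v t => stdPdf v * (s⁻¹ * stdPdf ((t - ρ*v)/s)) with hG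
  have hGcont : Continuous (Function.uncurry G) := by
    apply Continuous.mul (continuous_stdPdf.comp continuous_fst)
    apply Continuous.mul continuous_const
    exact continuous_stdPdf.comp (by fun_prop)
  have hGnonneg : ∀ v t, 0 ≤ G v t := fun v t => by
    have := stdPdf_pos v; have := stdPdf_pos ((t - ρ*v)/s)
    have : (0:ℝ) ≤ s⁻¹ := by positivity
    simp only [hG]
    positivity
  have hGsec : ∀ v : ℝ, Integrable (G v) := fun v =>
    ((integrable_stdPdf_affine hs0 (ρ*v)).const_mul s⁻¹).const_mul (stdPdf v)
  have hGsecint : ∀ v : ℝ, ∫ t, G v t = stdPdf v := fun v => by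
    simp only [hG]
    rw [MeasureTheory.integral_const_mul, integral_stdPdf_affine hs0 (ρ*v), mul_one]
  have hFint : Integrable (Function.uncurry G)
      (volume.prod (volume.restrict (Set.Iio ν))) := by
    rw [MeasureTheory.integrable_prod_iff hGcont.aestronglyMeasurable]
    constructor
    · exact Eventually.of_forall fun v => (hGsec v).integrableOn
    · apply Integrable.mono integrable_stdPdf
      · exact (hGcont.aestronglyMeasurable.norm).integral_prod_right'
      · refine Eventually.of_forall fun v => ?_
        simp only [Function.uncurry_apply_pair]
        have h1 : ∫ t in Set.Iio ν, ‖G v t‖ = ∫ t in Set.Iio ν, G v t := by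
          congr 1; funext t; exact Real.norm_of_nonneg (hGnonneg v t)
        rw [Real.norm_eq_abs, h1, abs_of_nonneg (integral_nonneg fun t => hGnonneg v t)]
        have h2 : ∫ t in Set.Iio ν, G v t ≤ ∫ t, G v t :=
          setIntegral_le_integral (hGsec v) (Eventually.of_forall fun t => hGnonneg v t)
        rw [hGsecint v] at h2
        exact h2.trans (le_abs_self _)
  have swap := MeasureTheory.integral_integral_swap (f := G) hFint
  calc ∫ v, stdCdf ((ν - ρ*v)/s) * stdPdf v
      = ∫ v, ∫ t in Set.Iio ν, G v t := by
        congr 1; funext v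
        rw [stdCdf_affine_repr hs0 (ρ*v) ν, ← MeasureTheory.integral_mul_const]
        congr 1; funext t; simp only [hG]; ring
    _ = ∫ t in Set.Iio ν, ∫ v, G v t := swap
    _ = ∫ t in Set.Iio ν, stdPdf t := by
        apply setIntegral_congr_fun measurableSet_Iio
        intro t _
        exact inner_integral hs0 hρ t
    _ = stdCdf ν := rfl
end Exchange

-- derivative of the inner affine-ish map ρ ↦ (ν - ρ v)/√(1-ρ²)
lemma hasDerivAt_q {ρ : ℝ} (hρ : ρ ^ 2 < 1) (ν v : ℝ) :
    HasDerivAt (fun r => (ν - r * v) / Real.sqrt (1 - r ^ 2))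
      ((ρ * ν - v) / (Real.sqrt (1 - ρ ^ 2)) ^ 3) ρ := by
  have h1 : (0:ℝ) < 1 - ρ ^ 2 := by linarith
  have hs0 : 0 < Real.sqrt (1 - ρ ^ 2) := Real.sqrt_pos.mpr h1
  have hs2 : Real.sqrt (1 - ρ ^ 2) ^ 2 = 1 - ρ ^ 2 := Real.sq_sqrt h1.le
  have hnum : HasDerivAt (fun r : ℝ => ν - r * v) (-v) ρ := by
    simpa using ((hasDerivAt_id ρ).mul_const v).const_sub ν
  have hinner : HasDerivAt (fun r : ℝ => 1 - r ^ 2) (-(2 * ρ)) ρ := by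
    simpa using (hasDerivAt_pow 2 ρ).const_sub 1
  have hden : HasDerivAt (fun r => Real.sqrt (1 - r ^ 2))
      (-ρ / Real.sqrt (1 - ρ ^ 2)) ρ := by
    have := (Real.hasDerivAt_sqrt h1.ne').comp ρ hinner
    refine this.congr_deriv ?_
    field_simp
  have := hnum.div hden hs0.ne'
  refine this.congr_deriv ?_
  rw [hs2]
  have hs : Real.sqrt (1 - ρ^2) ≠ 0 := hs0.ne'
  field_simp
  ring_nf
  linear_combination (v * Real.sqrt (1-ρ^2) * (Real.sqrt (1-ρ^2)^2 + 1) - ρ * ν * Real.sqrt (1-ρ^2) + (Real.sqrt (1-ρ^2) + 1) * (ρ * ν - v - v * Real.sqrt (1-ρ^2)^2)) * hs2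

-- pointwise identity between the ρ-derivative integrand and the v-derivative of phi2
lemma Fderiv_eq_phi2 {ρ : ℝ} (hρ : ρ ^ 2 < 1) (ν v : ℝ) :
    stdPdf ((ν - ρ * v) / Real.sqrt (1 - ρ ^ 2)) * ((ρ * ν - v) / (Real.sqrt (1 - ρ ^ 2)) ^ 3)
      * stdPdf v = phi2 v ν ρ * ((ρ * ν - v) / (1 - ρ ^ 2)) := by
  have h1 : (0:ℝ) < 1 - ρ ^ 2 := by linarith
  have hs0 : 0 < Real.sqrt (1 - ρ ^ 2) := Real.sqrt_pos.mpr h1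
  have hs2 : Real.sqrt (1 - ρ ^ 2) ^ 2 = 1 - ρ ^ 2 := Real.sq_sqrt h1.le
  have h2pi : (0:ℝ) < 2 * Real.pi := by positivity
  have hsq : Real.sqrt (2 * Real.pi) ^ 2 = 2 * Real.pi := Real.sq_sqrt h2pi.le
  have hne : Real.sqrt (2 * Real.pi) ≠ 0 := by positivity
  have hne2 : Real.sqrt (1 - ρ ^ 2) ≠ 0 := hs0.ne'
  have key : Real.exp (-(((ν - ρ * v) / Real.sqrt (1 - ρ ^ 2)) ^ 2) / 2) * Real.exp (-(v ^ 2) / 2)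
      = Real.exp (-(v ^ 2 - 2 * ρ * v * ν + ν ^ 2) / (2 * (1 - ρ ^ 2))) := by
    rw [← Real.exp_add]; congr 1
    rw [div_pow, hs2]; field_simp; ring
  have h2pi' : (Real.sqrt (2 * Real.pi))⁻¹ * (Real.sqrt (2 * Real.pi))⁻¹ = (2 * Real.pi)⁻¹ := by
    rw [← mul_inv, ← sq, hsq]
  have e3 : (Real.sqrt (1 - ρ ^ 2)) ^ 3 = (1 - ρ ^ 2) * Real.sqrt (1 - ρ ^ 2) := by
    rw [pow_succ, hs2]
  unfold stdPdf phi2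
  rw [e3, mul_inv (2 * Real.pi), ← h2pi', ← key]
  field_simp

lemma hasDerivAt_phi2_fst {ρ : ℝ} (hρ : ρ ^ 2 < 1) (ν v : ℝ) :
    HasDerivAt (fun u => phi2 u ν ρ) (phi2 v ν ρ * ((ρ * ν - v) / (1 - ρ ^ 2))) v := by
  have h1 : (0:ℝ) < 1 - ρ ^ 2 := by linarith
  have hq : HasDerivAt (fun u : ℝ => u ^ 2 - 2 * ρ * u * ν + ν ^ 2) (2 * v - 2 * ρ * ν) v := by
    have := (((hasDerivAt_pow 2 v).sub (((hasDerivAt_id v).const_mul (2 * ρ)).mul_const ν))).add_const (ν ^ 2)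
    refine this.congr_deriv ?_
    simp
  have heq : (fun u : ℝ => -(u ^ 2 - 2 * ρ * u * ν + ν ^ 2) / (2 * (1 - ρ ^ 2)))
      = fun u : ℝ => -(2 * (1 - ρ ^ 2))⁻¹ * (u ^ 2 - 2 * ρ * u * ν + ν ^ 2) :=
    funext fun u => by ring
  have hu : HasDerivAt (fun u : ℝ => -(u ^ 2 - 2 * ρ * u * ν + ν ^ 2) / (2 * (1 - ρ ^ 2)))
      ((ρ * ν - v) / (1 - ρ ^ 2)) v := by
    rw [heq]
    have h2 := hq.const_mul (-(2 * (1 - ρ ^ 2))⁻¹)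
    have h3 : -(2 * (1 - ρ ^ 2))⁻¹ * (2 * v - 2 * ρ * ν) = (ρ * ν - v) / (1 - ρ ^ 2) := by
      field_simp; ring
    rw [h3] at h2
    exact h2
  have hexp := (Real.hasDerivAt_exp (-(v ^ 2 - 2 * ρ * v * ν + ν ^ 2) / (2 * (1 - ρ ^ 2)))).comp v hu
  have hfin := hexp.const_mul (2 * Real.pi * Real.sqrt (1 - ρ ^ 2))⁻¹
  have hval : (2 * Real.pi * Real.sqrt (1 - ρ ^ 2))⁻¹ *
      (Real.exp (-(v ^ 2 - 2 * ρ * v * ν + ν ^ 2) / (2 * (1 - ρ ^ 2))) * ((ρ * ν - v) / (1 - ρ ^ 2)))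
      = phi2 v ν ρ * ((ρ * ν - v) / (1 - ρ ^ 2)) := by
    unfold phi2; ring
  rw [hval] at hfin
  exact hfin

lemma tendsto_phi2_fst_atBot {ρ : ℝ} (hρ : ρ ^ 2 < 1) (ν : ℝ) :
    Tendsto (fun u => phi2 u ν ρ) atBot (nhds 0) := by
  have h1 : (0:ℝ) < 1 - ρ ^ 2 := by linarith
  have h2 : Tendsto (fun u : ℝ => u ^ 2 - 2 * ρ * u * ν + ν ^ 2) atBot atTop := by
    have he : ∀ u : ℝ, u ^ 2 - 2 * ρ * u * ν + ν ^ 2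
        = (u - ρ * ν) ^ 2 + (ν ^ 2 - ρ ^ 2 * ν ^ 2) := fun u => by ring
    simp_rw [he]
    apply tendsto_atTop_add_const_right
    have h3 : Tendsto (fun u : ℝ => u - ρ * ν) atBot atBot :=
      tendsto_atBot_add_const_right _ _ tendsto_id
    have h4 : Tendsto (fun x : ℝ => x ^ 2) atBot atTop := by
      have h5 := (tendsto_pow_atTop (two_ne_zero)).comp (tendsto_abs_atBot_atTop (G := ℝ))
      refine h5.congr fun x => ?_
      simp [sq_abs]
    exact h4.comp h3
  have h5 : Tendsto (fun u : ℝ => -(u ^ 2 - 2 * ρ * u * ν + ν ^ 2) / (2 * (1 - ρ ^ 2)))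
      atBot atBot := by
    apply Tendsto.atBot_div_const (by positivity)
    exact tendsto_neg_atTop_atBot.comp h2
  have h6 := Real.tendsto_exp_atBot.comp h5
  have := h6.const_mul (2 * Real.pi * Real.sqrt (1 - ρ ^ 2))⁻¹
  unfold phi2
  simpa using this



lemma stdCdf_nonneg (x : ℝ) : 0 ≤ stdCdf x :=
  setIntegral_nonneg measurableSet_Iio fun v _ => (stdPdf_pos v).le

lemma stdCdf_le_one (x : ℝ) : stdCdf x ≤ 1 := by
  have := setIntegral_le_integral (s := Set.Iio x) integrable_stdPdf
    (Eventually.of_forall fun v => (stdPdf_pos v).le)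
  rw [integral_stdPdf] at this
  exact this

lemma stdCdf_pos (x : ℝ) : 0 < stdCdf x := by
  have h1 : stdCdf (x - 1) < stdCdf x :=
    cdf_strictMono continuous_stdPdf integrable_stdPdf stdPdf_pos (by linarith)
  exact lt_of_le_of_lt (stdCdf_nonneg (x - 1)) h1

lemma integrable_abs_mul_stdPdf : Integrable (fun v => |v| * stdPdf v) := by
  have h1 : Integrable (fun x : ℝ => x * Real.exp (-(1/2 : ℝ) * x ^ 2)) :=
    integrable_mul_exp_neg_mul_sq (by norm_num)
  have h2 : Integrable (fun x : ℝ => x * stdPdf x) := by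
    have := h1.const_mul (Real.sqrt (2 * Real.pi))⁻¹
    refine this.congr (Eventually.of_forall fun x => ?_)
    unfold stdPdf
    ring_nf
  have h3 := h2.abs
  refine h3.congr (Eventually.of_forall fun x => ?_)
  simp [abs_mul, abs_of_pos (stdPdf_pos x)]

lemma hasDerivAt_Phi2_rho (μ ν : ℝ) {ρ₀ : ℝ} (hρ₀ : ρ₀ ∈ Set.Ioo (-1:ℝ) 1) :
    HasDerivAt (fun ρ => Phi2 μ ν ρ) (phi2 μ ν ρ₀) ρ₀ := by
  obtain ⟨hρ₀l, hρ₀r⟩ := hρ₀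
  set ε : ℝ := min (ρ₀ + 1) (1 - ρ₀) / 2 with hε_def
  have hε : 0 < ε := by
    apply div_pos _ (by norm_num)
    apply lt_min <;> linarith
  set c : ℝ := (ρ₀ + 1) / 2 * ((1 - ρ₀) / 2) with hc_def
  have hc : 0 < c := by apply mul_pos <;> [skip; skip] <;> linarith
  set σ : ℝ := Real.sqrt c with hσ_def
  have hσ : 0 < σ := Real.sqrt_pos.mpr hc
  -- facts valid on the ball
  have hball : ∀ ρ ∈ Metric.ball ρ₀ ε, ρ ^ 2 < 1 ∧ c ≤ 1 - ρ ^ 2 ∧ |ρ| ≤ 1 := by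
    intro ρ hρ
    rw [Metric.mem_ball, Real.dist_eq] at hρ
    have h1 : |ρ - ρ₀| < ε := hρ
    have h2 := abs_lt.mp h1
    have hεle1 : ε ≤ (ρ₀ + 1) / 2 := by
      rw [hε_def]; apply div_le_div_of_nonneg_right (min_le_left _ _) (by norm_num) |>.trans_eq rfl
    have hεle2 : ε ≤ (1 - ρ₀) / 2 := by
      rw [hε_def]; exact div_le_div_of_nonneg_right (min_le_right _ _) (by norm_num)
    have hl : (ρ₀ + 1) / 2 ≤ ρ + 1 := by
      have := h2.1; linarith
    have hr : (1 - ρ₀) / 2 ≤ 1 - ρ := by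
      have := h2.2; linarith
    have hple : c ≤ (ρ + 1) * (1 - ρ) := by
      apply mul_le_mul hl hr (by linarith) (by linarith)
    have he : (ρ + 1) * (1 - ρ) = 1 - ρ ^ 2 := by ring
    rw [he] at hple
    refine ⟨by nlinarith, hple, ?_⟩
    rw [abs_le]; constructor <;> nlinarith
  have hσle : ∀ ρ ∈ Metric.ball ρ₀ ε, σ ≤ Real.sqrt (1 - ρ ^ 2) := by
    intro ρ hρ
    exact Real.sqrt_le_sqrt (hball ρ hρ).2.1
  -- the functions
  set F : ℝ → ℝ → ℝ := fun ρ v => stdCdf ((ν - ρ * v) / Real.sqrt (1 - ρ ^ 2)) * stdPdf v with hF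
  set F' : ℝ → ℝ → ℝ := fun ρ v =>
    stdPdf ((ν - ρ * v) / Real.sqrt (1 - ρ ^ 2)) * ((ρ * ν - v) / (Real.sqrt (1 - ρ ^ 2)) ^ 3)
      * stdPdf v with hF'
  set bound : ℝ → ℝ := fun v => (Real.sqrt (2 * Real.pi))⁻¹ * ((|ν| + |v|) / σ ^ 3) * stdPdf v
    with hbound_def
  have hFcont : ∀ ρ, Continuous (F ρ) := fun ρ => by
    apply Continuous.mul _ continuous_stdPdf
    exact continuous_stdCdf.comp (by fun_prop)
  have hF'cont : ∀ ρ, Continuous (F' ρ) := fun ρ => by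
    apply Continuous.mul _ continuous_stdPdf
    apply Continuous.mul
    · exact continuous_stdPdf.comp (by fun_prop)
    · fun_prop
  have hF'bound : ∀ v : ℝ, ∀ ρ ∈ Metric.ball ρ₀ ε, ‖F' ρ v‖ ≤ bound v := by
    intro v ρ hρ
    obtain ⟨h1, h2, h3⟩ := hball ρ hρ
    have hs0 : 0 < Real.sqrt (1 - ρ ^ 2) := Real.sqrt_pos.mpr (by nlinarith)
    have e1 : |stdPdf ((ν - ρ * v) / Real.sqrt (1 - ρ ^ 2))| ≤ (Real.sqrt (2 * Real.pi))⁻¹ := by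
      rw [abs_of_pos (stdPdf_pos _)]; exact stdPdf_le _
    have e2 : |(ρ * ν - v) / (Real.sqrt (1 - ρ ^ 2)) ^ 3| ≤ (|ν| + |v|) / σ ^ 3 := by
      rw [abs_div, abs_of_pos (pow_pos hs0 3)]
      apply div_le_div₀ (by positivity) ?_ (by positivity)
        (pow_le_pow_left₀ hσ.le (hσle ρ hρ) 3)
      calc |ρ * ν - v| ≤ |ρ * ν| + |v| := abs_sub _ _
        _ ≤ |ν| + |v| := by
          rw [abs_mul]
          nlinarith [abs_nonneg ν, abs_nonneg v, mul_le_mul_of_nonneg_right h3 (abs_nonneg ν)]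
    calc ‖F' ρ v‖ = |stdPdf ((ν - ρ * v) / Real.sqrt (1 - ρ ^ 2))|
          * |(ρ * ν - v) / (Real.sqrt (1 - ρ ^ 2)) ^ 3| * stdPdf v := by
          rw [hF', Real.norm_eq_abs, abs_mul, abs_mul, abs_of_pos (stdPdf_pos v)]
      _ ≤ (Real.sqrt (2 * Real.pi))⁻¹ * ((|ν| + |v|) / σ ^ 3) * stdPdf v := by
          apply mul_le_mul_of_nonneg_right _ (stdPdf_pos v).le
          exact mul_le_mul e1 e2 (abs_nonneg _) (by positivity)
      _ = bound v := rfl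
  have hbound_int : Integrable bound := by
    have h1 : Integrable (fun v : ℝ => |ν| * stdPdf v + |v| * stdPdf v) :=
      (integrable_stdPdf.const_mul _).add integrable_abs_mul_stdPdf
    have h2 := h1.const_mul ((Real.sqrt (2 * Real.pi))⁻¹ / σ ^ 3)
    refine h2.congr (Eventually.of_forall fun v => ?_)
    rw [hbound_def]
    field_simp
  have hdiff : ∀ v : ℝ, ∀ ρ ∈ Metric.ball ρ₀ ε, HasDerivAt (fun r => F r v) (F' ρ v) ρ := by
    intro v ρ hρ
    have h1 := (hball ρ hρ).1
    have hq := hasDerivAt_q h1 ν v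
    have hcdf := (hasDerivAt_stdCdf ((ν - ρ * v) / Real.sqrt (1 - ρ ^ 2))).comp ρ hq
    exact hcdf.mul_const (stdPdf v)
  have hρ₀ball : ρ₀ ∈ Metric.ball ρ₀ ε := Metric.mem_ball_self hε
  have main := hasDerivAt_integral_of_dominated_loc_of_deriv_le (μ := volume.restrict (Set.Iio μ))
    (F := F) (F' := F') (x₀ := ρ₀) (bound := bound) (Metric.ball_mem_nhds ρ₀ hε)
    (Eventually.of_forall fun ρ => (hFcont ρ).aestronglyMeasurable.restrict)
    ?hFint
    ((hF'cont ρ₀).aestronglyMeasurable.restrict)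
    (Eventually.of_forall fun v => fun ρ hρ => hF'bound v ρ hρ)
    hbound_int.restrict
    (Eventually.of_forall fun v => fun ρ hρ => hdiff v ρ hρ)
  case hFint =>
    apply Integrable.mono integrable_stdPdf.restrict ((hFcont ρ₀).aestronglyMeasurable.restrict)
    refine Eventually.of_forall fun v => ?_
    rw [hF, Real.norm_eq_abs, Real.norm_eq_abs, abs_mul, abs_of_nonneg (stdCdf_nonneg _),
      abs_of_pos (stdPdf_pos v)]
    nlinarith [stdCdf_le_one ((ν - ρ₀ * v) / Real.sqrt (1 - ρ₀ ^ 2)), stdPdf_pos v,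
      stdCdf_nonneg ((ν - ρ₀ * v) / Real.sqrt (1 - ρ₀ ^ 2))]
  obtain ⟨hF'int, hderiv⟩ := main
  -- now identify the derivative with phi2 μ ν ρ₀
  have h1 : ρ₀ ^ 2 < 1 := (hball ρ₀ hρ₀ball).1
  have hF'eq : ∀ v, F' ρ₀ v = phi2 v ν ρ₀ * ((ρ₀ * ν - v) / (1 - ρ₀ ^ 2)) := fun v =>
    Fderiv_eq_phi2 h1 ν v
  have hint_eq : ∫ v in Set.Iio μ, F' ρ₀ v = phi2 μ ν ρ₀ := by
    have hIntOn : IntegrableOn (fun v => phi2 v ν ρ₀ * ((ρ₀ * ν - v) / (1 - ρ₀ ^ 2)))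
        (Set.Iic μ) := by
      have : Integrable (F' ρ₀) := by
        apply Integrable.mono hbound_int (hF'cont ρ₀).aestronglyMeasurable
        refine Eventually.of_forall fun v => ?_
        refine (hF'bound v ρ₀ hρ₀ball).trans ?_
        rw [Real.norm_eq_abs]
        exact le_abs_self _
      exact ((this.congr (Eventually.of_forall fun v => hF'eq v))).integrableOn
    have hd : ∀ v ∈ Set.Iic μ, HasDerivAt (fun u => phi2 u ν ρ₀)
        (phi2 v ν ρ₀ * ((ρ₀ * ν - v) / (1 - ρ₀ ^ 2))) v := fun v _ =>
      hasDerivAt_phi2_fst h1 ν v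
    have htend := tendsto_phi2_fst_atBot h1 ν
    have := MeasureTheory.integral_Iic_of_hasDerivAt_of_tendsto' hd hIntOn htend
    calc ∫ v in Set.Iio μ, F' ρ₀ v
        = ∫ v in Set.Iio μ, phi2 v ν ρ₀ * ((ρ₀ * ν - v) / (1 - ρ₀ ^ 2)) := by
          apply setIntegral_congr_fun measurableSet_Iio
          intro v _; exact hF'eq v
      _ = ∫ v in Set.Iic μ, phi2 v ν ρ₀ * ((ρ₀ * ν - v) / (1 - ρ₀ ^ 2)) :=
          (integral_Iic_eq_integral_Iio).symm
      _ = phi2 μ ν ρ₀ - 0 := this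
      _ = phi2 μ ν ρ₀ := by ring
  rw [hint_eq] at hderiv
  exact hderiv


section PerRho
variable {ρ : ℝ} (hρmem : ρ ∈ Set.Ioo (-1:ℝ) 1) (ν : ℝ)

include hρmem in
lemma Phi2_integrand_pos (v : ℝ) :
    0 < stdCdf ((ν - ρ * v) / Real.sqrt (1 - ρ ^ 2)) * stdPdf v :=
  mul_pos (stdCdf_pos _) (stdPdf_pos v)

include hρmem in
lemma Phi2_integrand_integrable :
    Integrable (fun v => stdCdf ((ν - ρ * v) / Real.sqrt (1 - ρ ^ 2)) * stdPdf v) := by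
  have hc : Continuous (fun v => stdCdf ((ν - ρ * v) / Real.sqrt (1 - ρ ^ 2)) * stdPdf v) :=
    (continuous_stdCdf.comp (by fun_prop)).mul continuous_stdPdf
  apply Integrable.mono integrable_stdPdf hc.aestronglyMeasurable
  refine Eventually.of_forall fun v => ?_
  rw [Real.norm_eq_abs, Real.norm_eq_abs, abs_mul, abs_of_nonneg (stdCdf_nonneg _),
    abs_of_pos (stdPdf_pos v)]
  nlinarith [stdCdf_le_one ((ν - ρ * v) / Real.sqrt (1 - ρ ^ 2)), stdPdf_pos v,
    stdCdf_nonneg ((ν - ρ * v) / Real.sqrt (1 - ρ ^ 2))]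

include hρmem in
lemma Phi2_mu_strictMono : StrictMono (fun μ => Phi2 μ ν ρ) := by
  have hc : Continuous (fun v => stdCdf ((ν - ρ * v) / Real.sqrt (1 - ρ ^ 2)) * stdPdf v) :=
    (continuous_stdCdf.comp (by fun_prop)).mul continuous_stdPdf
  exact cdf_strictMono hc (Phi2_integrand_integrable hρmem ν) (Phi2_integrand_pos hρmem ν)

include hρmem in
lemma Phi2_existsUnique {p : ℝ} (hp0 : 0 < p) (hp1 : p < stdCdf ν) :
    ∃! μ : ℝ, Phi2 μ ν ρ = p := by
  obtain ⟨hρl, hρr⟩ := hρmem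
  have h1 : (0:ℝ) < 1 - ρ ^ 2 := by nlinarith
  have hs0 : 0 < Real.sqrt (1 - ρ ^ 2) := Real.sqrt_pos.mpr h1
  have hs2 : Real.sqrt (1 - ρ ^ 2) ^ 2 = 1 - ρ ^ 2 := Real.sq_sqrt h1.le
  have hρmem' : ρ ∈ Set.Ioo (-1:ℝ) 1 := ⟨hρl, hρr⟩
  have hc : Continuous (fun v => stdCdf ((ν - ρ * v) / Real.sqrt (1 - ρ ^ 2)) * stdPdf v) :=
    (continuous_stdCdf.comp (by fun_prop)).mul continuous_stdPdf
  have hi := Phi2_integrand_integrable hρmem' ν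
  have gsm := Phi2_mu_strictMono hρmem' ν
  have gcont : Continuous (fun μ => Phi2 μ ν ρ) := by
    refine continuous_iff_continuousAt.mpr fun μ => ?_
    exact (cdf_hasDerivAt hc hi μ).continuousAt
  have gbot : Tendsto (fun μ => Phi2 μ ν ρ) atBot (nhds 0) := cdf_tendsto_atBot hc hi
  have gtop : Tendsto (fun μ => Phi2 μ ν ρ) atTop (nhds (stdCdf ν)) := by
    have := cdf_tendsto_atTop hc hi
    rwa [phi2_total hs0 hs2 ν] at this
  obtain ⟨a, ha⟩ := (gbot.eventually_lt_const hp0).exists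
  obtain ⟨b, hb⟩ := (gtop.eventually_const_lt hp1).exists
  have hab : a < b := gsm.lt_iff_lt.mp (lt_trans ha hb)
  have hmem : p ∈ Set.Icc (Phi2 a ν ρ) (Phi2 b ν ρ) := ⟨ha.le, hb.le⟩
  obtain ⟨μ0, _, hμ0⟩ := intermediate_value_Icc hab.le gcont.continuousOn hmem
  have hμ0' : Phi2 μ0 ν ρ = p := hμ0
  exact ⟨μ0, hμ0', fun y hy => gsm.injective
    (by show Phi2 y ν ρ = Phi2 μ0 ν ρ; rw [hy, hμ0'])⟩

end PerRho

lemma phi2_pos {ρ : ℝ} (hρ : ρ ∈ Set.Ioo (-1:ℝ) 1) (μ ν : ℝ) : 0 < phi2 μ ν ρ := by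
  obtain ⟨hρl, hρr⟩ := hρ
  have h1 : (0:ℝ) < 1 - ρ ^ 2 := by nlinarith
  have hs0 : 0 < Real.sqrt (1 - ρ ^ 2) := Real.sqrt_pos.mpr h1
  unfold phi2
  have h2pi : (0:ℝ) < 2 * Real.pi := by positivity
  positivity

lemma Phi2_rho_strictMonoOn (μ ν : ℝ) :
    StrictMonoOn (fun ρ => Phi2 μ ν ρ) (Set.Ioo (-1:ℝ) 1) := by
  apply strictMonoOn_of_deriv_pos (convex_Ioo _ _)
  · intro ρ hρ
    exact (hasDerivAt_Phi2_rho μ ν hρ).continuousAt.continuousWithinAt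
  · intro ρ hρ
    rw [interior_Ioo] at hρ
    rw [(hasDerivAt_Phi2_rho μ ν hρ).deriv]
    exact phi2_pos hρ μ ν


theorem stmt17 (ν p : ℝ) (hp0 : 0 < p) (hp1 : p < stdCdf ν) :
    ∃ f : ℝ → ℝ,
      (∀ ρ ∈ Set.Ioo (-1 : ℝ) 1,
        Phi2 (f ρ) ν ρ = p ∧ ∀ μ : ℝ, Phi2 μ ν ρ = p → μ = f ρ) ∧
      StrictAntiOn f (Set.Ioo (-1 : ℝ) 1) := by
  classical
  have key : ∀ ρ ∈ Set.Ioo (-1:ℝ) 1, ∃! μ : ℝ, Phi2 μ ν ρ = p :=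
    fun ρ hρ => Phi2_existsUnique hρ ν hp0 hp1
  set f : ℝ → ℝ := fun ρ =>
    if hρ : ρ ∈ Set.Ioo (-1:ℝ) 1 then (key ρ hρ).choose else 0 with hf_def
  have hfspec : ∀ ρ (hρ : ρ ∈ Set.Ioo (-1:ℝ) 1),
      Phi2 (f ρ) ν ρ = p ∧ ∀ μ : ℝ, Phi2 μ ν ρ = p → μ = f ρ := by
    intro ρ hρ
    have hspec := (key ρ hρ).choose_spec
    rw [hf_def]
    simp only [dif_pos hρ]
    exact ⟨hspec.1, fun μ hμ => hspec.2 μ hμ⟩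
  refine ⟨f, hfspec, ?_⟩
  intro ρ₁ h₁ ρ₂ h₂ hlt
  have h21 : Phi2 (f ρ₂) ν ρ₁ < Phi2 (f ρ₂) ν ρ₂ :=
    Phi2_rho_strictMonoOn (f ρ₂) ν h₁ h₂ hlt
  have e2 : Phi2 (f ρ₂) ν ρ₂ = p := (hfspec ρ₂ h₂).1
  have e1 : Phi2 (f ρ₁) ν ρ₁ = p := (hfspec ρ₁ h₁).1
  have : Phi2 (f ρ₂) ν ρ₁ < Phi2 (f ρ₁) ν ρ₁ := by rw [e1, ← e2]; exact h21
  exact (Phi2_mu_strictMono h₁ ν).lt_iff_lt.mp this
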